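/- Let A, B ⊆ ℝⁿ be nonempty closed sets and x, y ∈ ℝⁿ with |x| ≤ |y|. Then the integrated set distance satisfies 𝐝(A + x, B + y) ≤ e^{|x|} · 𝐝(A, B) + |x − y|, where 𝐝(A,B) := ∫₀^∞ d_ρ(A,B) e^{−ρ} dρ. -/

import Mathlib

/-- Truncated set distance `d_ρ(A,B) = sup_{|z| ≤ ρ} |d(z,A) − d(z,B)|`. -/
noncomputable def dTrunc {E : Type*} [NormedAddCommGroup E] (A B : Set E) (ρ : ℝ) : ℝ :=
  sSup ((fun z => |Metric.infDist z A - Metric.infDist z B|) '' Metric.closedBall (0 : E) ρ)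

/-- Integrated set distance `𝐝(A,B) = ∫₀^∞ d_ρ(A,B) e^{−ρ} dρ`. -/
noncomputable def dInt {E : Type*} [NormedAddCommGroup E] (A B : Set E) : ℝ :=
  ∫ ρ in Set.Ioi (0 : ℝ), dTrunc A B ρ * Real.exp (-ρ)

open Metric MeasureTheory Real Set

section Aux

variable {E : Type*} [NormedAddCommGroup E]

lemma abs_infDist_sub_le (s : Set E) (x y : E) :
    |Metric.infDist x s - Metric.infDist y s| ≤ dist x y := by
  rw [abs_sub_le_iff]
  constructor
  · linarith [Metric.infDist_le_infDist_add_dist (x := x) (y := y) (s := s)]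
  · have := Metric.infDist_le_infDist_add_dist (x := y) (y := x) (s := s)
    rw [dist_comm] at this; linarith

lemma dTrunc_elt_bound (A B : Set E) {ρ : ℝ} {z : E} (hz : z ∈ Metric.closedBall (0 : E) ρ) :
    |Metric.infDist z A - Metric.infDist z B| ≤
      |Metric.infDist (0:E) A - Metric.infDist (0:E) B| + 2 * ρ := by
  have hz' : dist z (0:E) ≤ ρ := mem_closedBall.mp hz
  have h1 := abs_infDist_sub_le A z 0
  have h2 := abs_infDist_sub_le B z 0
  have t1 := abs_sub_le (Metric.infDist z A) (Metric.infDist (0:E) A) (Metric.infDist z B)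
  have t2 := abs_sub_le (Metric.infDist (0:E) A) (Metric.infDist (0:E) B) (Metric.infDist z B)
  have h2' : |Metric.infDist (0:E) B - Metric.infDist z B| ≤ dist z 0 := by
    rw [abs_sub_comm]; exact h2
  linarith

lemma dTrunc_bddAbove (A B : Set E) (ρ : ℝ) :
    BddAbove ((fun z => |Metric.infDist z A - Metric.infDist z B|) '' Metric.closedBall (0 : E) ρ) := by
  refine ⟨|Metric.infDist (0:E) A - Metric.infDist (0:E) B| + 2 * ρ, ?_⟩
  rintro _ ⟨z, hz, rfl⟩
  exact dTrunc_elt_bound A B hz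

lemma dTrunc_nonneg (A B : Set E) (ρ : ℝ) : 0 ≤ dTrunc A B ρ := by
  rcases lt_or_ge ρ 0 with hρ | hρ
  · rw [dTrunc, Metric.closedBall_eq_empty.mpr hρ]
    simp [Real.sSup_empty]
  · have h0 : (0:E) ∈ Metric.closedBall (0:E) ρ := by simpa using hρ
    have := le_csSup (dTrunc_bddAbove A B ρ) (Set.mem_image_of_mem _ h0)
    exact le_trans (abs_nonneg _) this

lemma dTrunc_mono (A B : Set E) : Monotone (dTrunc A B) := by
  intro ρ₁ ρ₂ h
  rcases lt_or_ge ρ₁ 0 with hρ | hρ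
  · rw [dTrunc, Metric.closedBall_eq_empty.mpr hρ]
    simpa [Real.sSup_empty] using dTrunc_nonneg A B ρ₂
  · apply csSup_le_csSup (dTrunc_bddAbove A B ρ₂)
    · exact ⟨_, Set.mem_image_of_mem _ (by simpa using hρ : (0:E) ∈ Metric.closedBall (0:E) ρ₁)⟩
    · exact Set.image_mono (Metric.closedBall_subset_closedBall h)

lemma dTrunc_le_bound (A B : Set E) {ρ : ℝ} (hρ : 0 ≤ ρ) :
    dTrunc A B ρ ≤ |Metric.infDist (0:E) A - Metric.infDist (0:E) B| + 2 * ρ := by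
  apply csSup_le
  · exact ⟨_, Set.mem_image_of_mem _ (by simpa using hρ : (0:E) ∈ Metric.closedBall (0:E) ρ)⟩
  · rintro _ ⟨z, hz, rfl⟩
    exact dTrunc_elt_bound A B hz

lemma aux_int2 : IntegrableOn (fun ρ : ℝ => 2 * ρ * Real.exp (-ρ)) (Set.Ioi (0:ℝ)) := by
  have h := Real.GammaIntegral_convergent (s := 2) (by norm_num)
  have h3 : IntegrableOn (fun x : ℝ => 2 * (Real.exp (-x) * x ^ ((2:ℝ)-1))) (Set.Ioi 0) :=
    h.const_mul 2
  exact h3.congr_fun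
    (fun x hx => by simp only [show (2:ℝ)-1 = 1 by norm_num, Real.rpow_one]; ring) measurableSet_Ioi

lemma dTrunc_integrable (A B : Set E) :
    IntegrableOn (fun ρ => dTrunc A B ρ * Real.exp (-ρ)) (Set.Ioi (0:ℝ)) := by
  set C := |Metric.infDist (0:E) A - Metric.infDist (0:E) B| with hC
  have hmeas : AEStronglyMeasurable (fun ρ => dTrunc A B ρ * Real.exp (-ρ))
      (volume.restrict (Set.Ioi (0:ℝ))) :=
    ((dTrunc_mono A B).measurable.mul (by fun_prop)).aestronglyMeasurable
  have hint1 : IntegrableOn (fun ρ : ℝ => C * Real.exp (-ρ)) (Set.Ioi (0:ℝ)) := by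
    have h := exp_neg_integrableOn_Ioi (0:ℝ) (b := 1) one_pos
    exact (h.congr_fun (fun x _ => by norm_num) measurableSet_Ioi).const_mul C
  refine Integrable.mono' (hint1.add aux_int2) hmeas ?_
  rw [ae_restrict_iff' measurableSet_Ioi]
  filter_upwards with ρ hρ
  have h0 : (0:ℝ) ≤ ρ := le_of_lt hρ
  have hb := dTrunc_le_bound A B h0
  have hnn := dTrunc_nonneg A B ρ
  have hexp : (0:ℝ) < Real.exp (-ρ) := Real.exp_pos _
  rw [Real.norm_eq_abs, abs_of_nonneg (mul_nonneg hnn hexp.le)]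
  have : dTrunc A B ρ * Real.exp (-ρ) ≤ (C + 2 * ρ) * Real.exp (-ρ) :=
    mul_le_mul_of_nonneg_right hb hexp.le
  calc dTrunc A B ρ * Real.exp (-ρ) ≤ (C + 2 * ρ) * Real.exp (-ρ) := this
    _ = C * Real.exp (-ρ) + 2 * ρ * Real.exp (-ρ) := by ring

lemma infDist_translate (A : Set E) (x z : E) :
    Metric.infDist z ((fun a => a + x) '' A) = Metric.infDist (z - x) A := by
  have hiso : Isometry (fun a : E => a + x) := Isometry.of_dist_eq (fun a b => dist_add_right a b x)
  have := Metric.infDist_image hiso (x := z - x) (t := A)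
  simpa using this

lemma dTrunc_shift (A B : Set E) (x y : E) {ρ : ℝ} (hρ : 0 ≤ ρ) :
    dTrunc ((fun a => a + x) '' A) ((fun b => b + y) '' B) ρ ≤
      dTrunc A B (ρ + ‖x‖) + ‖x - y‖ := by
  apply csSup_le
    ⟨_, Set.mem_image_of_mem _ (by simpa using hρ : (0:E) ∈ Metric.closedBall (0:E) ρ)⟩
  rintro _ ⟨z, hz, rfl⟩
  simp only
  rw [infDist_translate, infDist_translate]
  have h1 : |Metric.infDist (z-x) A - Metric.infDist (z-x) B| ≤ dTrunc A B (ρ + ‖x‖) := by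
    apply le_csSup (dTrunc_bddAbove A B _)
    refine Set.mem_image_of_mem _ ?_
    simp only [Metric.mem_closedBall, dist_zero_right]
    have hzρ : ‖z‖ ≤ ρ := by simpa using hz
    calc ‖z - x‖ ≤ ‖z‖ + ‖x‖ := norm_sub_le _ _
      _ ≤ ρ + ‖x‖ := by linarith
  have hd : dist (z-x) (z-y) = ‖x - y‖ := by
    rw [dist_eq_norm, ← norm_neg]; congr 1; abel
  have h2 : |Metric.infDist (z-x) B - Metric.infDist (z-y) B| ≤ ‖x - y‖ :=
    le_trans (abs_infDist_sub_le B (z-x) (z-y)) (le_of_eq hd)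
  calc |Metric.infDist (z-x) A - Metric.infDist (z-y) B|
      ≤ |Metric.infDist (z-x) A - Metric.infDist (z-x) B| +
        |Metric.infDist (z-x) B - Metric.infDist (z-y) B| := abs_sub_le _ _ _
    _ ≤ _ := add_le_add h1 h2

lemma integrableOn_shift {f : ℝ → ℝ} {a : ℝ} (hf : IntegrableOn f (Set.Ioi a)) :
    IntegrableOn (fun ρ => f (ρ + a)) (Set.Ioi (0:ℝ)) := by
  have he : Set.indicator (Set.Ioi 0) (fun ρ => f (ρ + a)) =
      fun ρ => Set.indicator (Set.Ioi a) f (ρ + a) := by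
    funext ρ
    by_cases h : ρ ∈ Set.Ioi (0:ℝ)
    · rw [Set.indicator_of_mem h, Set.indicator_of_mem (by simp at h ⊢; linarith)]
    · rw [Set.indicator_of_notMem h, Set.indicator_of_notMem (by simp at h ⊢; linarith)]
  have h2 : Integrable (Set.indicator (Set.Ioi (0:ℝ)) fun ρ => f (ρ + a)) := by
    rw [he]
    exact ((integrable_indicator_iff measurableSet_Ioi).mpr hf).comp_add_right a
  exact (integrable_indicator_iff measurableSet_Ioi).mp h2

lemma integral_shift (f : ℝ → ℝ) (a : ℝ) :
    (∫ ρ in Set.Ioi (0:ℝ), f (ρ + a)) = ∫ s in Set.Ioi a, f s := by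
  rw [← integral_indicator measurableSet_Ioi, ← integral_indicator measurableSet_Ioi]
  have he : Set.indicator (Set.Ioi 0) (fun ρ => f (ρ + a)) =
      fun ρ => Set.indicator (Set.Ioi a) f (ρ + a) := by
    funext ρ
    by_cases h : ρ ∈ Set.Ioi (0:ℝ)
    · rw [Set.indicator_of_mem h, Set.indicator_of_mem (by simp at h ⊢; linarith)]
    · rw [Set.indicator_of_notMem h, Set.indicator_of_notMem (by simp at h ⊢; linarith)]
  rw [he]
  exact integral_add_right_eq_self (Set.indicator (Set.Ioi a) f) a

end Aux

theorem stmt4 (n : ℕ) (A B : Set (EuclideanSpace ℝ (Fin n)))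
    (hAne : A.Nonempty) (hAcl : IsClosed A) (hBne : B.Nonempty) (hBcl : IsClosed B)
    (x y : EuclideanSpace ℝ (Fin n)) (hxy : ‖x‖ ≤ ‖y‖) :
    dInt ((fun a => a + x) '' A) ((fun b => b + y) '' B) ≤
      Real.exp ‖x‖ * dInt A B + ‖x - y‖ := by
  set c := ‖x‖ with hc
  have hc0 : (0:ℝ) ≤ c := norm_nonneg x
  set f : ℝ → ℝ := fun s => dTrunc A B s * Real.exp (-s) with hf
  have hfint : IntegrableOn f (Set.Ioi 0) := dTrunc_integrable A B
  have hfnn : ∀ s, 0 ≤ f s := fun s =>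
    mul_nonneg (dTrunc_nonneg A B s) (Real.exp_pos _).le
  have hshift_int : IntegrableOn (fun ρ => f (ρ + c)) (Set.Ioi 0) :=
    integrableOn_shift (hfint.mono_set (Set.Ioi_subset_Ioi hc0))
  have hexp_int : IntegrableOn (fun ρ : ℝ => ‖x - y‖ * Real.exp (-ρ)) (Set.Ioi (0:ℝ)) := by
    have h := exp_neg_integrableOn_Ioi (0:ℝ) (b := 1) one_pos
    exact (h.congr_fun (fun s _ => by norm_num) measurableSet_Ioi).const_mul _
  have hLHS : IntegrableOn
      (fun ρ => dTrunc ((fun a => a + x) '' A) ((fun b => b + y) '' B) ρ * Real.exp (-ρ))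
      (Set.Ioi (0:ℝ)) := dTrunc_integrable _ _
  have hRHS : IntegrableOn (fun ρ => Real.exp c * f (ρ + c) + ‖x - y‖ * Real.exp (-ρ))
      (Set.Ioi (0:ℝ)) := (hshift_int.const_mul _).add hexp_int
  have key : ∀ ρ ∈ Set.Ioi (0:ℝ),
      dTrunc ((fun a => a + x) '' A) ((fun b => b + y) '' B) ρ * Real.exp (-ρ) ≤
        Real.exp c * f (ρ + c) + ‖x - y‖ * Real.exp (-ρ) := by
    intro ρ hρ
    have hρ0 : (0:ℝ) ≤ ρ := le_of_lt hρ
    have hb := dTrunc_shift A B x y hρ0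
    have hexp : (0:ℝ) < Real.exp (-ρ) := Real.exp_pos _
    have heq : Real.exp c * f (ρ + c) = dTrunc A B (ρ + c) * Real.exp (-ρ) := by
      rw [hf]
      have : Real.exp c * Real.exp (-(ρ + c)) = Real.exp (-ρ) := by
        rw [← Real.exp_add]; ring_nf
      calc Real.exp c * (dTrunc A B (ρ + c) * Real.exp (-(ρ + c)))
          = dTrunc A B (ρ + c) * (Real.exp c * Real.exp (-(ρ + c))) := by ring
        _ = dTrunc A B (ρ + c) * Real.exp (-ρ) := by rw [this]
    rw [heq]
    calc dTrunc ((fun a => a + x) '' A) ((fun b => b + y) '' B) ρ * Real.exp (-ρ)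
        ≤ (dTrunc A B (ρ + c) + ‖x - y‖) * Real.exp (-ρ) :=
          mul_le_mul_of_nonneg_right hb hexp.le
      _ = dTrunc A B (ρ + c) * Real.exp (-ρ) + ‖x - y‖ * Real.exp (-ρ) := by ring
  calc dInt ((fun a => a + x) '' A) ((fun b => b + y) '' B)
      ≤ ∫ ρ in Set.Ioi (0:ℝ), (Real.exp c * f (ρ + c) + ‖x - y‖ * Real.exp (-ρ)) :=
        setIntegral_mono_on hLHS hRHS measurableSet_Ioi key
    _ = Real.exp c * (∫ ρ in Set.Ioi (0:ℝ), f (ρ + c)) +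
        ‖x - y‖ * ∫ ρ in Set.Ioi (0:ℝ), Real.exp (-ρ) := by
        rw [integral_add (hshift_int.const_mul _) hexp_int, integral_const_mul,
          integral_const_mul]
    _ = Real.exp c * (∫ s in Set.Ioi c, f s) + ‖x - y‖ * 1 := by
        rw [integral_shift f c, integral_exp_neg_Ioi_zero]
    _ ≤ Real.exp c * (∫ s in Set.Ioi (0:ℝ), f s) + ‖x - y‖ := by
        rw [mul_one]
        have hmono : (∫ s in Set.Ioi c, f s) ≤ ∫ s in Set.Ioi (0:ℝ), f s := by
          apply setIntegral_mono_set hfint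
          · filter_upwards with s using hfnn s
          · exact HasSubset.Subset.eventuallyLE (Set.Ioi_subset_Ioi hc0)
        exact add_le_add_left (mul_le_mul_of_nonneg_left hmono (Real.exp_pos _).le) _
    _ = Real.exp ‖x‖ * dInt A B + ‖x - y‖ := rfl
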